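/- If a linear function A: ℝ^k → ℝ with non-negative coefficients is strictly positive on every standard basis vector, then A attains its infimum on any nonempty closed polyhedron contained in the non-negative orthant, and if the polyhedron is rational the minimum is attained at a rational point (so the minimum value is rational). -/

import Mathlib

open Finset Submodule Set

private theorem aux_span_of_no_kernel {K : Type*} [Field K] {m k : ℕ} (w : Fin m → Fin k → K)
    (h : ∀ v : Fin k → K, (∀ j, ∑ i, w j i * v i = 0) → v = 0) :
    Submodule.span K (Set.range w) = ⊤ := by
  classical
  set M : Matrix (Fin m) (Fin k) K := Matrix.of w with hM
  have hker : LinearMap.ker M.mulVecLin = ⊥ := by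
    rw [LinearMap.ker_eq_bot']
    intro v hv
    apply h
    intro j
    have := congrFun hv j
    simpa [Matrix.mulVecLin, Matrix.mulVec, dotProduct, hM] using this
  have hrank : M.rank = k := by
    have := LinearMap.finrank_range_add_finrank_ker M.mulVecLin
    rw [hker, finrank_bot] at this
    simpa [Matrix.rank, Module.finrank_pi] using this
  have hspan := M.rank_eq_finrank_span_row
  have hr : Set.range w = Set.range M.row := rfl
  apply Submodule.eq_top_of_finrank_eq
  rw [hr, ← hspan, hrank, Module.finrank_pi]
  simp

private theorem aux_dot_continuous {k : ℕ} (c : Fin k → ℝ) :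
    Continuous fun u : Fin k → ℝ => ∑ i, c i * u i :=
  continuous_finset_sum _ fun i _ => (continuous_const.mul (continuous_apply i))

private theorem aux_dot_smul_add {k : ℕ} (c x y : Fin k → ℝ) (s t : ℝ) :
    ∑ i, c i * (s • x + t • y) i = s * ∑ i, c i * x i + t * ∑ i, c i * y i := by
  rw [Finset.mul_sum, Finset.mul_sum, ← Finset.sum_add_distrib]
  refine Finset.sum_congr rfl fun i _ => ?_
  simp only [Pi.add_apply, Pi.smul_apply, smul_eq_mul]
  ring

private theorem aux_isClosed {k m : ℕ} (c : Fin m → Fin k → ℝ) (d : Fin m → ℝ) :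
    IsClosed {u : Fin k → ℝ | ∀ j, ∑ i, c j i * u i ≤ d j} := by
  have : {u : Fin k → ℝ | ∀ j, ∑ i, c j i * u i ≤ d j}
      = ⋂ j, {u | ∑ i, c j i * u i ≤ d j} := by ext u; simp [Set.mem_iInter]
  rw [this]
  exact isClosed_iInter fun j => isClosed_le (aux_dot_continuous (c j)) continuous_const

private theorem aux_convex {k m : ℕ} (c : Fin m → Fin k → ℝ) (d : Fin m → ℝ) :
    Convex ℝ {u : Fin k → ℝ | ∀ j, ∑ i, c j i * u i ≤ d j} := by
  intro x hx y hy s t hs ht hst j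
  rw [Set.mem_setOf_eq] at hx hy
  calc ∑ i, c j i * (s • x + t • y) i = s * ∑ i, c j i * x i + t * ∑ i, c j i * y i :=
        aux_dot_smul_add _ _ _ _ _
    _ ≤ s * d j + t * d j := by
        gcongr <;> [exact hx j; exact hy j]
    _ = d j := by rw [← add_mul, hst, one_mul]


private theorem aux_dot_add_smul {k : ℕ} (c x v : Fin k → ℝ) (t : ℝ) :
    ∑ i, c i * (x + t • v) i = ∑ i, c i * x i + t * ∑ i, c i * v i := by
  have := aux_dot_smul_add c x v 1 t
  simpa using this

theorem linear_attains_min_on_polyhedron_in_orthant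
    (k m : ℕ) (a : Fin k → ℝ) (ha : ∀ i, 0 < a i)
    (c : Fin m → Fin k → ℝ) (d : Fin m → ℝ)
    (Q : Set (Fin k → ℝ))
    (hQ : Q = {u | ∀ j, ∑ i, c j i * u i ≤ d j})
    (horth : Q ⊆ {u | ∀ i, 0 ≤ u i})
    (hne : Q.Nonempty) :
    (∃ u' ∈ Q, IsLeast {r : ℝ | ∃ u ∈ Q, r = ∑ i, a i * u i} (∑ i, a i * u' i)) ∧
    ((∀ j i, ∃ q : ℚ, c j i = (q : ℝ)) → (∀ j, ∃ q : ℚ, d j = (q : ℝ)) →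
      ∃ u' ∈ Q, (∀ i, ∃ q : ℚ, u' i = (q : ℝ)) ∧
        IsLeast {r : ℝ | ∃ u ∈ Q, r = ∑ i, a i * u i} (∑ i, a i * u' i) ∧
        (∀ hq : ∀ i, ∃ q : ℚ, a i = (q : ℝ), ∃ q : ℚ, (∑ i, a i * u' i) = (q : ℝ))) := by
  classical
  set A : (Fin k → ℝ) → ℝ := fun u => ∑ i, a i * u i with hA
  have hAcont : Continuous A := aux_dot_continuous a
  obtain ⟨u₀, hu₀⟩ := hne
  set Kc : Set (Fin k → ℝ) := Q ∩ {u | A u ≤ A u₀} with hKc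
  -- Kc is compact
  have hKcl : IsClosed Kc := by
    apply IsClosed.inter (hQ ▸ aux_isClosed c d)
    exact isClosed_le hAcont continuous_const
  have hKsub : Kc ⊆ Set.pi Set.univ fun i => Set.Icc (0:ℝ) (A u₀ / a i) := by
    rintro u ⟨huQ, huA⟩ i _
    have h0 : ∀ i', 0 ≤ u i' := horth huQ
    refine ⟨h0 i, ?_⟩
    rw [le_div_iff₀ (ha i), mul_comm]
    calc a i * u i ≤ ∑ i', a i' * u i' := by
          apply Finset.single_le_sum (f := fun i' => a i' * u i') (fun i' _ =>
            mul_nonneg (ha i').le (h0 i')) (Finset.mem_univ i)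
      _ ≤ A u₀ := huA
  have hKcomp : IsCompact Kc :=
    IsCompact.of_isClosed_subset (isCompact_univ_pi fun i => isCompact_Icc) hKcl hKsub
  have hKne : Kc.Nonempty := ⟨u₀, hu₀, le_refl (A u₀)⟩
  -- minimum on Kc
  obtain ⟨z, hzK, hzmin⟩ := hKcomp.exists_isMinOn hKne hAcont.continuousOn
  -- minimum on Q
  have hminQ : ∀ u ∈ Q, A z ≤ A u := by
    intro u huQ
    by_cases h : A u ≤ A u₀
    · exact hzmin ⟨huQ, h⟩
    · exact le_trans (hzmin (⟨hu₀, le_refl (A u₀)⟩ : u₀ ∈ Kc)) (le_of_not_ge h)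
  have hIsLeast : ∀ x ∈ Q, A x = A z →
      IsLeast {r : ℝ | ∃ u ∈ Q, r = ∑ i, a i * u i} (∑ i, a i * x i) := by
    intro x hxQ hxz
    constructor
    · exact ⟨x, hxQ, rfl⟩
    · rintro r ⟨u, huQ, rfl⟩
      calc ∑ i, a i * x i = A z := hxz
        _ ≤ A u := hminQ u huQ
  refine ⟨⟨z, hzK.1, hIsLeast z hzK.1 rfl⟩, ?_⟩
  intro hc hd
  -- the optimal face F
  set F : Set (Fin k → ℝ) := Q ∩ {u | A u ≤ A z} with hF
  have hQcl : IsClosed Q := hQ ▸ aux_isClosed c d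
  have hQconv : Convex ℝ Q := hQ ▸ aux_convex c d
  have hFz : ∀ u ∈ F, A u = A z := fun u hu => le_antisymm hu.2 (hminQ u hu.1)
  have hFcl : IsClosed F := hQcl.inter (isClosed_le hAcont continuous_const)
  have hFsub : F ⊆ Kc := fun u hu => ⟨hu.1, le_trans hu.2 (hminQ u₀ hu₀)⟩
  have hFcomp : IsCompact F := hKcomp.of_isClosed_subset hFcl hFsub
  have hFconv : Convex ℝ F := by
    intro x hx y hy s t hs ht hst
    refine ⟨hQconv hx.1 hy.1 hs ht hst, ?_⟩
    show A (s • x + t • y) ≤ A z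
    calc A (s • x + t • y) = s * A x + t * A y := aux_dot_smul_add _ _ _ _ _
      _ ≤ s * A z + t * A z := by gcongr <;> [exact hx.2; exact hy.2]
      _ = A z := by rw [← add_mul, hst, one_mul]
  have hFne : F.Nonempty := ⟨z, hzK.1, le_refl (A z)⟩
  obtain ⟨x, hx⟩ := hFcomp.extremePoints_nonempty hFne
  rw [mem_extremePoints] at hx
  have hxQ : x ∈ Q := hx.1.1
  have hAx : A x = A z := hFz x hx.1
  -- x is an extreme point of Q
  have hxExtQ : ∀ y₁ ∈ Q, ∀ y₂ ∈ Q, x ∈ openSegment ℝ y₁ y₂ → y₁ = x ∧ y₂ = x := by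
    intro y₁ h1 y₂ h2 hseg
    obtain ⟨s, t, hs, ht, hst, hxy⟩ := hseg
    have hA1 : A z ≤ A y₁ := hminQ _ h1
    have hA2 : A z ≤ A y₂ := hminQ _ h2
    have hcomb : s * A y₁ + t * A y₂ = A z := by
      rw [← hAx, ← hxy]
      exact (aux_dot_smul_add _ _ _ _ _).symm
    have ht2 := mul_le_mul_of_nonneg_left hA2 ht.le
    have ht1 := mul_le_mul_of_nonneg_left hA1 hs.le
    have hAz : s * A z + t * A z = A z := by rw [← add_mul, hst, one_mul]
    have hy1 : A y₁ ≤ A z := by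
      have hs1 : s * A y₁ ≤ s * A z := by linarith
      exact le_of_mul_le_mul_left hs1 hs
    have hy2 : A y₂ ≤ A z := by
      have hs2 : t * A y₂ ≤ t * A z := by linarith
      exact le_of_mul_le_mul_left hs2 ht
    have hy₁F : y₁ ∈ F := ⟨h1, hy1⟩
    have hy₂F : y₂ ∈ F := ⟨h2, hy2⟩
    exact hx.2 y₁ hy₁F y₂ hy₂F ⟨s, t, hs, ht, hst, hxy⟩
  -- active constraints
  set act : Fin m → Prop := fun j => ∑ i, c j i * x i = d j with hact
  choose cq hcq using hc
  choose dq hdq using hd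
  set wq : Fin m → Fin k → ℚ := fun j => if act j then cq j else 0 with hwq
  have hxQ' : ∀ j, ∑ i, c j i * x i ≤ d j := by rw [hQ] at hxQ; exact hxQ
  have hspan : Submodule.span ℚ (Set.range wq) = ⊤ := by
    apply aux_span_of_no_kernel
    intro vq hvq
    by_contra hvne
    set v : Fin k → ℝ := fun i => (vq i : ℝ) with hv
    have hvne' : v ≠ 0 := by
      intro h
      apply hvne
      funext i
      have := congrFun h i
      simpa [hv] using this
    have hdotv : ∀ j, act j → ∑ i, c j i * v i = 0 := by
      intro j hj
      have h0 : ((∑ i, wq j i * vq i : ℚ) : ℝ) = 0 := by rw [hvq j]; simp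
      push_cast at h0
      rw [← h0]
      refine Finset.sum_congr rfl fun i _ => ?_
      rw [hwq]
      simp only [if_pos hj]
      rw [hcq j i]
    have hev : ∀ᶠ t : ℝ in nhds 0, x + t • v ∈ Q := by
      rw [hQ]
      simp only [Set.mem_setOf_eq]
      rw [Filter.eventually_all]
      intro j
      by_cases hj : act j
      · apply Filter.Eventually.of_forall
        intro t
        rw [aux_dot_add_smul, hdotv j hj, mul_zero, add_zero]
        exact hxQ' j
      · have hlt : ∑ i, c j i * x i < d j := lt_of_le_of_ne (hxQ' j) hj
        have hcont : ContinuousAt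
            (fun t : ℝ => (∑ i, c j i * x i) + t * ∑ i, c j i * v i) 0 := by
          exact (continuous_const.add (continuous_id.mul continuous_const)).continuousAt
        have h0 : (fun t : ℝ => (∑ i, c j i * x i) + t * ∑ i, c j i * v i) 0 < d j := by
          simpa using hlt
        have hev' := hcont.eventually_lt continuousAt_const h0
        refine hev'.mono fun t h => ?_
        rw [aux_dot_add_smul]
        exact le_of_lt h
    obtain ⟨ε, hε, hball⟩ := Metric.eventually_nhds_iff.mp hev
    set t : ℝ := ε / 2 with htdef
    have ht0 : (0:ℝ) < t := by positivity
    have h1 : x + t • v ∈ Q := by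
      apply hball
      simp only [Real.dist_eq, sub_zero]
      rw [abs_of_pos ht0]
      linarith
    have h2 : x + (-t) • v ∈ Q := by
      apply hball
      simp only [Real.dist_eq, sub_zero]
      rw [abs_of_neg (by linarith : -t < 0)]
      simp only [neg_neg]
      linarith
    have hseg : x ∈ openSegment ℝ (x + t • v) (x + (-t) • v) := by
      refine ⟨1/2, 1/2, by norm_num, by norm_num, by norm_num, ?_⟩
      module
    have := (hxExtQ _ h1 _ h2 hseg).1
    have htv : t • v = 0 := by
      have h' := this
      rwa [add_eq_left] at h'
    rcases smul_eq_zero.mp htv with h | h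
    · exact absurd h (ne_of_gt ht0)
    · exact hvne' h
  -- x is rational
  have hxrat : ∀ i, ∃ q : ℚ, x i = (q : ℝ) := by
    intro i
    have hmem : (Pi.single i (1:ℚ) : Fin k → ℚ) ∈ Submodule.span ℚ (Set.range wq) := by
      rw [hspan]; trivial
    obtain ⟨lam, hlam⟩ := (mem_span_range_iff_exists_fun ℚ).mp hmem
    refine ⟨∑ j, lam j * (if act j then dq j else 0), ?_⟩
    have key : ∀ i', ∑ j, (lam j : ℝ) * (wq j i' : ℝ) = if i = i' then 1 else 0 := by
      intro i'
      have h := congrFun hlam i'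
      simp only [Finset.sum_apply, Pi.smul_apply, smul_eq_mul] at h
      have : ((∑ j, lam j * wq j i' : ℚ) : ℝ) = ((Pi.single i (1:ℚ) : Fin k → ℚ) i' : ℝ) := by
        rw [h]
      push_cast at this
      rw [this]
      by_cases hii : i = i'
      · subst hii; simp
      · simp [Pi.single_apply, hii]
    calc x i = ∑ i', (if i = i' then (1:ℝ) else 0) * x i' := by
          simp [ite_mul]
      _ = ∑ i', (∑ j, (lam j : ℝ) * (wq j i' : ℝ)) * x i' := by
          refine Finset.sum_congr rfl fun i' _ => ?_
          rw [key i']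
      _ = ∑ j, (lam j : ℝ) * ∑ i', (wq j i' : ℝ) * x i' := by
          simp_rw [Finset.sum_mul, Finset.mul_sum]
          rw [Finset.sum_comm]
          exact Finset.sum_congr rfl fun j _ => Finset.sum_congr rfl fun i' _ => by ring
      _ = ∑ j, (lam j : ℝ) * (if act j then d j else 0) := by
          refine Finset.sum_congr rfl fun j _ => ?_
          congr 1
          by_cases hj : act j
          · rw [if_pos hj, ← hj]
            refine Finset.sum_congr rfl fun i' _ => ?_
            rw [hwq]
            simp only [if_pos hj]
            rw [hcq j i']
          · rw [if_neg hj, hwq]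
            simp [if_neg hj]
      _ = ((∑ j, lam j * (if act j then dq j else 0) : ℚ) : ℝ) := by
          push_cast
          refine Finset.sum_congr rfl fun j _ => ?_
          congr 1
          by_cases hj : act j
          · rw [if_pos hj, if_pos hj, hdq j]
          · rw [if_neg hj, if_neg hj]
            simp
  refine ⟨x, hxQ, hxrat, hIsLeast x hxQ hAx, ?_⟩
  intro hq
  choose aq haq using hq
  choose xq hxq using hxrat
  refine ⟨∑ i, aq i * xq i, ?_⟩
  push_cast
  refine Finset.sum_congr rfl fun i _ => ?_
  rw [haq i, hxq i]
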